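/- For the quadratic form Q_{FT} = k₁k₂ + k₃k₄ + ... + k_{2ℓ−1}k_{2ℓ} in 2ℓ variables, the Dirichlet series L(s, Q_{FT}) = ∑_{q≥1} S_{Q_{FT}}(q) q^{-s} (where S_F(q) = q^{-1}∑_{a ∈ (ℤ/q)^*}∑_{h ∈ (ℤ/q)^{2ℓ}} e(aF(h)/q)) equals ζ(s − ℓ)/ζ(s + 1 − ℓ) for all real s > 2ℓ. -/
import Mathlib


open Complex Finset

noncomputable def e (x : ℝ) : ℂ := Complex.exp (2 * Real.pi * Complex.I * x)


open LSeries in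
open scoped LSeries.notation in
lemma conv_totient' : (1 : ℕ → ℂ) ⍟ (fun n => (Nat.totient n : ℂ)) = fun n : ℕ => (n : ℂ) := by
  funext n
  rw [LSeries.convolution_def]
  rcases eq_or_ne n 0 with rfl | hn
  · simp
  · simp only [Pi.one_apply, one_mul]
    rw [Nat.sum_divisorsAntidiagonal' (f := fun _ y => (Nat.totient y : ℂ))]
    rw [← Nat.cast_sum, Nat.sum_totient]

lemma totient_LSeriesSummable {z : ℂ} (hz : 2 < z.re) :
    LSeriesSummable (fun n => (Nat.totient n : ℂ)) z := by
  refine LSeriesSummable_of_le_const_mul_rpow hz ⟨1, fun n hn => ?_⟩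
  rw [one_mul]
  simp only [Complex.norm_natCast]
  calc (Nat.totient n : ℝ) ≤ (n : ℝ) := by exact_mod_cast Nat.totient_le n
  _ = (n : ℝ) ^ ((2:ℝ) - 1) := by norm_num

lemma totient_LSeries {z : ℂ} (hz : 2 < z.re) :
    LSeries (fun n => (Nat.totient n : ℂ)) z = riemannZeta (z - 1) / riemannZeta z := by
  have h1 : 1 < z.re := by linarith
  have h1' : 1 < (z - 1).re := by simp only [Complex.sub_re, Complex.one_re]; linarith
  have hφ := totient_LSeriesSummable hz
  have h1s : LSeriesSummable 1 z := LSeriesSummable_one_iff.mpr h1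
  have hid : LSeries (fun n : ℕ => (n : ℂ)) z = riemannZeta (z - 1) := by
    rw [← LSeries_one_eq_riemannZeta h1']
    unfold LSeries
    refine tsum_congr fun n => ?_
    rcases eq_or_ne n 0 with rfl | hn
    · simp [LSeries.term]
    · rw [LSeries.term_of_ne_zero hn, LSeries.term_of_ne_zero hn]
      have hnc : (n : ℂ) ≠ 0 := Nat.cast_ne_zero.mpr hn
      rw [Pi.one_apply]
      rw [show z = (z - 1) + 1 by ring, cpow_add _ _ hnc, cpow_one]
      rw [mul_comm, ← div_div, div_self hnc]; ring_nf
  have key := LSeries_convolution' h1s hφ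
  rw [conv_totient', hid] at key
  rw [LSeries_one_eq_riemannZeta h1] at key
  rw [eq_div_iff (riemannZeta_ne_zero_of_one_lt_re h1), mul_comm, ← key]

lemma addChar_map_sum {A M : Type*} [AddCommMonoid A] [CommMonoid M] (ψ : AddChar A M)
    {ι : Type*} (s : Finset ι) (f : ι → A) : ψ (∑ i ∈ s, f i) = ∏ i ∈ s, ψ (f i) := by
  classical
  induction s using Finset.cons_induction with
  | empty => simp [AddChar.map_zero_eq_one]
  | cons i s hi ih => rw [Finset.sum_cons, Finset.prod_cons, AddChar.map_add_eq_mul, ih]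

lemma e_eq_stdAddChar (n : ℕ) [NeZero n] (m : ℤ) :
    e ((m : ℝ) / (n : ℝ)) = ZMod.stdAddChar (m : ZMod n) := by
  rw [ZMod.stdAddChar_coe, e]
  push_cast
  ring_nf

lemma char_sum (ℓ n : ℕ) [NeZero n] (a : (ZMod n)ˣ) :
    ∑ u : Fin ℓ → ZMod n, ∑ v : Fin ℓ → ZMod n,
      ZMod.stdAddChar ((a : ZMod n) * ∑ i : Fin ℓ, u i * v i) = (n : ℂ) ^ ℓ := by
  have hprim := ZMod.isPrimitive_stdAddChar n
  have hcard : Fintype.card (ZMod n) = n := ZMod.card n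
  calc ∑ u : Fin ℓ → ZMod n, ∑ v : Fin ℓ → ZMod n,
        ZMod.stdAddChar ((a : ZMod n) * ∑ i : Fin ℓ, u i * v i)
      = ∑ u : Fin ℓ → ZMod n, ∑ v : Fin ℓ → ZMod n,
        ∏ i : Fin ℓ, ZMod.stdAddChar (((a : ZMod n) * u i) * v i) := by
        refine Finset.sum_congr rfl fun u _ => Finset.sum_congr rfl fun v _ => ?_
        rw [Finset.mul_sum, addChar_map_sum]
        simp_rw [mul_assoc]
    _ = ∑ u : Fin ℓ → ZMod n, ∏ i : Fin ℓ, ∑ x : ZMod n,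
          ZMod.stdAddChar (((a : ZMod n) * u i) * x) := by
        refine Finset.sum_congr rfl fun u _ => ?_
        rw [Finset.prod_univ_sum, Fintype.piFinset_univ]
    _ = ∑ u : Fin ℓ → ZMod n, ∏ i : Fin ℓ, (if u i = 0 then (n : ℂ) else 0) := by
        refine Finset.sum_congr rfl fun u _ => Finset.prod_congr rfl fun i _ => ?_
        simp_rw [mul_comm ((a : ZMod n) * u i) _]
        rw [AddChar.sum_mulShift _ hprim]
        have : (a : ZMod n) * u i = 0 ↔ u i = 0 := by
          constructor
          · intro h
            have := congrArg (fun x => ((a⁻¹ : (ZMod n)ˣ) : ZMod n) * x) h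
            simpa [← mul_assoc] using this
          · intro h; rw [h, mul_zero]
        rw [hcard]
        split_ifs with h1 h2 h2
        · simp
        · exact absurd (this.mp h1) h2
        · exact absurd (this.mpr h2) h1
        · simp
    _ = ∏ i : Fin ℓ, ∑ x : ZMod n, (if x = 0 then (n : ℂ) else 0) := by
        rw [Finset.prod_univ_sum, Fintype.piFinset_univ]
    _ = (n : ℂ) ^ ℓ := by
        simp [Finset.sum_ite_eq']

theorem stmt16 (ℓ : ℕ) (hℓ : 1 ≤ ℓ) (s : ℝ) (hs : (2 * ℓ : ℝ) < s) :
    ∑' q : ℕ,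
        (((q + 1 : ℕ) : ℂ)⁻¹ *
          ∑ a : (ZMod (q + 1))ˣ, ∑ u : Fin ℓ → ZMod (q + 1), ∑ v : Fin ℓ → ZMod (q + 1),
            e ((((a : ZMod (q + 1)).val : ℤ) *
                (∑ i : Fin ℓ, ((u i).val : ℤ) * ((v i).val : ℤ)) : ℤ) / ((q + 1 : ℕ) : ℝ))) *
          ((((q + 1 : ℕ) : ℝ) ^ (-s) : ℝ) : ℂ) =
      riemannZeta ((s : ℂ) - (ℓ : ℂ)) / riemannZeta ((s : ℂ) + 1 - (ℓ : ℂ)) := by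
  set z : ℂ := (s : ℂ) + 1 - (ℓ : ℂ) with hz
  have hℓr : (1 : ℝ) ≤ (ℓ : ℝ) := by exact_mod_cast hℓ
  have hzre : 2 < z.re := by
    simp only [hz, Complex.sub_re, Complex.add_re, Complex.ofReal_re, Complex.one_re,
      Complex.natCast_re]
    nlinarith
  -- each term equals the LSeries term of totient at z, shifted
  have hterm : ∀ q : ℕ,
      (((q + 1 : ℕ) : ℂ)⁻¹ *
          ∑ a : (ZMod (q + 1))ˣ, ∑ u : Fin ℓ → ZMod (q + 1), ∑ v : Fin ℓ → ZMod (q + 1),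
            e ((((a : ZMod (q + 1)).val : ℤ) *
                (∑ i : Fin ℓ, ((u i).val : ℤ) * ((v i).val : ℤ)) : ℤ) / ((q + 1 : ℕ) : ℝ))) *
          ((((q + 1 : ℕ) : ℝ) ^ (-s) : ℝ) : ℂ) =
      LSeries.term (fun n => (Nat.totient n : ℂ)) z (q + 1) := by
    intro q
    set n : ℕ := q + 1 with hn
    have hn0 : n ≠ 0 := Nat.succ_ne_zero q
    have : NeZero n := ⟨hn0⟩
    have hnc : (n : ℂ) ≠ 0 := Nat.cast_ne_zero.mpr hn0
    -- rewrite the inner sum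
    have hinner : ∀ a : (ZMod n)ˣ,
        (∑ u : Fin ℓ → ZMod n, ∑ v : Fin ℓ → ZMod n,
          e ((((a : ZMod n).val : ℤ) *
              (∑ i : Fin ℓ, ((u i).val : ℤ) * ((v i).val : ℤ)) : ℤ) / ((n : ℕ) : ℝ)))
        = (n : ℂ) ^ ℓ := by
      intro a
      rw [← char_sum ℓ n a]
      refine Finset.sum_congr rfl fun u _ => Finset.sum_congr rfl fun v _ => ?_
      rw [show ((((a : ZMod n).val : ℤ) *
              (∑ i : Fin ℓ, ((u i).val : ℤ) * ((v i).val : ℤ)) : ℤ) : ℝ) / ((n : ℕ) : ℝ)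
            = ((((a : ZMod n).val : ℤ) *
              (∑ i : Fin ℓ, ((u i).val : ℤ) * ((v i).val : ℤ)) : ℤ) : ℝ) / ((n : ℕ) : ℝ) from rfl]
      rw [e_eq_stdAddChar n]
      congr 1
      push_cast [ZMod.natCast_val, ZMod.intCast_cast, ZMod.cast_id]
      ring
    rw [Finset.sum_congr rfl fun a _ => hinner a, Finset.sum_const, Finset.card_univ,
      ZMod.card_units_eq_totient, nsmul_eq_mul]
    rw [LSeries.term_of_ne_zero hn0]
    have hrs : ((((n : ℕ) : ℝ) ^ (-s) : ℝ) : ℂ) = (n : ℂ) ^ (-(s : ℂ)) := by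
      rw [Complex.ofReal_cpow (Nat.cast_nonneg n)]
      norm_cast
    rw [hrs]
    have hpow : (n : ℂ)⁻¹ * ((n : ℂ) ^ ℓ) * (n : ℂ) ^ (-(s : ℂ)) = (n : ℂ) ^ (-z) := by
      rw [← Complex.cpow_natCast (n : ℂ) ℓ, ← Complex.cpow_neg_one (n : ℂ),
        ← Complex.cpow_add _ _ hnc, ← Complex.cpow_add _ _ hnc]
      congr 1
      simp only [hz]
      ring
    calc (n : ℂ)⁻¹ * ((Nat.totient n : ℂ) * (n : ℂ) ^ ℓ) * (n : ℂ) ^ (-(s : ℂ))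
        = (Nat.totient n : ℂ) * ((n : ℂ)⁻¹ * ((n : ℂ) ^ ℓ) * (n : ℂ) ^ (-(s : ℂ))) := by ring
      _ = (Nat.totient n : ℂ) * (n : ℂ) ^ (-z) := by rw [hpow]
      _ = (Nat.totient n : ℂ) / (n : ℂ) ^ z := by
          rw [Complex.cpow_neg, div_eq_mul_inv]
  rw [tsum_congr hterm]
  have hφ := totient_LSeriesSummable hzre
  have hshift := Summable.tsum_eq_zero_add hφ
  rw [LSeries.term_zero, zero_add] at hshift
  rw [← hshift]
  have := totient_LSeries hzre
  rw [LSeries] at this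
  rw [this]
  congr 2
  simp only [hz]
  ring
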